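/- Let $(h_n)_{n\ge0}$ be $C^1$ functions of period 1 with unit variance $\int_0^1(h_n - \int_0^1 h_n)^2 = 1$ and $\sup_n \|h_n'\|_\infty = K_1 < \infty$. Let $\gamma_0=1$, $\gamma_{n+1}/\gamma_n \in [\gamma_{\min}, \gamma_{\max}]$ with $\gamma_{\min}>1$, and $R_n = \prod_{k=0}^n r_k$ with $r_0=1$ and integers $r_k \ge \rho_{\min} \ge 2$. Set $H^p(x) = \sum_{n=0}^p \gamma_n h_n(x/R_n)$, an $R_p$-periodic function, and $\mathrm{Var}(H^p) = \frac{1}{R_p}\int_0^{R_p}(H^p - \bar{H^p})^2$. If $\epsilon := 4K_1(\rho_{\min}(\gamma_{\min}-1))^{-1} < 1$, then for all $p \ge 0$: $(1-\epsilon)\sum_{k=0}^p \gamma_k^2 \le \mathrm{Var}(H^p) \le (1+\epsilon)\sum_{k=0}^p \gamma_k^2$. -/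

import Mathlib

open MeasureTheory intervalIntegral

/-- Variance of a periodic function over one period `[0, R]`. -/
noncomputable def perVar (R : ℝ) (f : ℝ → ℝ) : ℝ :=
  (1 / R) * ∫ x in (0:ℝ)..R, (f x - (1 / R) * ∫ y in (0:ℝ)..R, f y) ^ 2

lemma int_nat_mul {f : ℝ → ℝ} {T : ℝ} (hf : Continuous f)
    (hper : Function.Periodic f T) (n : ℕ) :
    ∫ x in (0:ℝ)..((n:ℝ)*T), f x = n * ∫ x in (0:ℝ)..T, f x := by
  induction n with
  | zero => simp
  | succ n ih =>
    have h2 : ∫ x in ((n:ℝ)*T)..((n:ℝ)*T+T), f x = ∫ x in (0:ℝ)..T, f x := by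
      simpa using hper.intervalIntegral_add_eq ((n:ℝ)*T) 0
    have h3 := integral_add_adjacent_intervals (a := (0:ℝ)) (b := (n:ℝ)*T)
      (c := (n:ℝ)*T+T) (μ := volume) (f := f)
      (hf.intervalIntegrable _ _) (hf.intervalIntegrable _ _)
    push_cast
    rw [show ((n:ℝ)+1)*T = (n:ℝ)*T+T by ring, ← h3, ih, h2]
    ring

lemma mean_nat_mul {f : ℝ → ℝ} {T : ℝ} (hT : T ≠ 0) (hf : Continuous f)
    (hper : Function.Periodic f T) {n : ℕ} (hn : n ≠ 0) :
    (1/((n:ℝ)*T)) * ∫ x in (0:ℝ)..((n:ℝ)*T), f x = (1/T) * ∫ x in (0:ℝ)..T, f x := by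
  have hn0 : (n:ℝ) ≠ 0 := Nat.cast_ne_zero.mpr hn
  rw [int_nat_mul hf hper n]
  field_simp

lemma perVar_nat_mul {f : ℝ → ℝ} {T : ℝ} (hT : T ≠ 0) (hf : Continuous f)
    (hper : Function.Periodic f T) {n : ℕ} (hn : n ≠ 0) :
    perVar ((n:ℝ)*T) f = perVar T f := by
  have hn0 : (n:ℝ) ≠ 0 := Nat.cast_ne_zero.mpr hn
  unfold perVar
  rw [mean_nat_mul hT hf hper hn]
  set m := (1/T) * ∫ y in (0:ℝ)..T, f y with hm
  have hper2 : Function.Periodic (fun x => (f x - m)^2) T := fun x => by simp [hper x]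
  have hcont2 : Continuous (fun x => (f x - m)^2) := by continuity
  rw [int_nat_mul hcont2 hper2 n]
  field_simp

lemma mean_comp_div {g : ℝ → ℝ} {R : ℝ} (hR : 0 < R) :
    (1/R) * ∫ x in (0:ℝ)..R, g (x/R) = ∫ y in (0:ℝ)..1, g y := by
  have hR0 : R ≠ 0 := hR.ne'
  rw [intervalIntegral.integral_comp_div (c := R) (f := g) hR0, zero_div, div_self hR0,
    smul_eq_mul]
  field_simp

lemma perVar_comp_div {g : ℝ → ℝ} {R : ℝ} (hR : 0 < R) :
    perVar R (fun x => g (x/R)) = perVar 1 g := by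
  have hR0 : R ≠ 0 := hR.ne'
  unfold perVar
  rw [mean_comp_div hR]
  set m := ∫ y in (0:ℝ)..1, g y with hm
  have houter : ∫ x in (0:ℝ)..R, (g (x/R) - m)^2 = R * ∫ u in (0:ℝ)..1, (g u - m)^2 := by
    have h := intervalIntegral.integral_comp_div (a := (0:ℝ)) (b := R) (c := R)
      (f := fun u => (g u - m)^2) hR0
    simpa [zero_div, div_self hR0, smul_eq_mul] using h
  rw [houter]
  field_simp

lemma perVar_const_mul (c : ℝ) (f : ℝ → ℝ) (R : ℝ) :
    perVar R (fun x => c * f x) = c^2 * perVar R f := by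
  unfold perVar
  rw [intervalIntegral.integral_const_mul]
  have h : (fun x => (c * f x - 1/R * (c * ∫ y in (0:ℝ)..R, f y)) ^ 2)
      = fun x => c^2 * (f x - 1/R * ∫ y in (0:ℝ)..R, f y) ^ 2 := by
    funext x; ring
  rw [h, intervalIntegral.integral_const_mul]
  ring

lemma cauchy_mean_abs {f : ℝ → ℝ} {L : ℝ} (hL : 0 ≤ L) (hf : Continuous f) :
    (∫ x in (0:ℝ)..L, |f x|)^2 ≤ L * ∫ x in (0:ℝ)..L, (f x)^2 := by
  set A := ∫ x in (0:ℝ)..L, (f x)^2 with hA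
  set B := ∫ x in (0:ℝ)..L, |f x| with hB
  have key : ∀ t : ℝ, 0 ≤ A * (t*t) + (-2*B) * t + L := by
    intro t
    have e1 : ∀ x : ℝ, (t*|f x| - 1)^2 = t*t*((f x)^2) + (-2*t)*|f x| + 1 := by
      intro x
      nlinarith [sq_abs (f x)]
    have hint1 : IntervalIntegrable (fun x => t*t*((f x)^2)) volume 0 L := by
      apply Continuous.intervalIntegrable; continuity
    have hint2 : IntervalIntegrable (fun x => (-2*t)*|f x|) volume 0 L := by
      apply Continuous.intervalIntegrable
      exact continuous_const.mul hf.abs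
    have hint3 : IntervalIntegrable (fun x => (1:ℝ)) volume 0 L :=
      intervalIntegrable_const
    have e2 : ∫ x in (0:ℝ)..L, (t*|f x| - 1)^2
        = A * (t*t) + (-2*B) * t + L := by
      rw [intervalIntegral.integral_congr (g := fun x => t*t*((f x)^2) + ((-2*t)*|f x| + 1))
        (fun x _ => by rw [e1 x]; ring)]
      rw [intervalIntegral.integral_add hint1 (hint2.add hint3),
        intervalIntegral.integral_add hint2 hint3,
        intervalIntegral.integral_const_mul, intervalIntegral.integral_const_mul,
        intervalIntegral.integral_const]
      simp [hA, hB]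
      ring
    rw [← e2]
    apply intervalIntegral.integral_nonneg hL
    intro u _
    positivity
  have hd := discrim_le_zero key
  rw [discrim] at hd
  nlinarith [hd]

lemma mix {f g : ℝ → ℝ} {T Lip : ℝ} (hT : 0 < T) (hf : Continuous f)
    (hperf : Function.Periodic f T) (hzero : ∫ x in (0:ℝ)..T, f x = 0)
    (hg : Continuous g) (hLip0 : 0 ≤ Lip)
    (hLip : ∀ x y : ℝ, |g x - g y| ≤ Lip * |x - y|) (n : ℕ) :
    |∫ x in (0:ℝ)..((n:ℝ)*T), f x * g x| ≤ Lip * T * ∫ x in (0:ℝ)..((n:ℝ)*T), |f x| := by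
  set a : ℕ → ℝ := fun j => (j:ℝ)*T with ha
  have ha0 : a 0 = 0 := by simp [ha]
  have hintfg : ∀ u v : ℝ, IntervalIntegrable (fun x => f x * g x) volume u v :=
    fun u v => (hf.mul hg).intervalIntegrable u v
  have hintaf : ∀ u v : ℝ, IntervalIntegrable (fun x => |f x|) volume u v :=
    fun u v => hf.abs.intervalIntegrable u v
  have hsum1 : ∑ j ∈ Finset.range n, ∫ x in a j..a (j+1), f x * g x
      = ∫ x in (0:ℝ)..((n:ℝ)*T), f x * g x := by
    have := intervalIntegral.sum_integral_adjacent_intervals (μ := volume)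
      (f := fun x => f x * g x) (a := a) (n := n) (fun i _ => hintfg _ _)
    rwa [ha0] at this
  have hsum2 : ∑ j ∈ Finset.range n, ∫ x in a j..a (j+1), |f x|
      = ∫ x in (0:ℝ)..((n:ℝ)*T), |f x| := by
    have := intervalIntegral.sum_integral_adjacent_intervals (μ := volume)
      (f := fun x => |f x|) (a := a) (n := n) (fun i _ => hintaf _ _)
    rwa [ha0] at this
  have key : ∀ j : ℕ, |∫ x in a j..a (j+1), f x * g x|
      ≤ Lip * T * ∫ x in a j..a (j+1), |f x| := by
    intro j
    have haj : a (j+1) = a j + T := by simp [ha]; ring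
    have hle : a j ≤ a (j+1) := by rw [haj]; linarith
    have hz : ∫ x in a j..a (j+1), f x = 0 := by
      rw [haj, hperf.intervalIntegral_add_eq (a j) 0]
      simpa using hzero
    have split : ∫ x in a j..a (j+1), f x * g x
        = ∫ x in a j..a (j+1), f x * (g x - g (a j)) := by
      have e : ∀ x ∈ Set.uIcc (a j) (a (j+1)),
          f x * g x = f x * (g x - g (a j)) + g (a j) * f x := fun x _ => by ring
      have hi1 : IntervalIntegrable (fun x => f x * (g x - g (a j))) volume (a j) (a (j+1)) :=
        (hf.mul (by continuity)).intervalIntegrable _ _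
      have hi2 : IntervalIntegrable (fun x => g (a j) * f x) volume (a j) (a (j+1)) :=
        (continuous_const.mul hf).intervalIntegrable _ _
      rw [intervalIntegral.integral_congr e,
        intervalIntegral.integral_add hi1 hi2,
        intervalIntegral.integral_const_mul, hz]
      ring
    rw [split]
    calc |∫ x in a j..a (j+1), f x * (g x - g (a j))|
        ≤ ∫ x in a j..a (j+1), |f x * (g x - g (a j))| :=
          intervalIntegral.abs_integral_le_integral_abs hle
      _ ≤ ∫ x in a j..a (j+1), Lip * T * |f x| := by
          apply intervalIntegral.integral_mono_on hle
          · exact ((hf.mul (by continuity)).abs).intervalIntegrable _ _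
          · exact (continuous_const.mul hf.abs).intervalIntegrable _ _
          · intro x hx
            rw [abs_mul]
            have h1 : |g x - g (a j)| ≤ Lip * T := by
              calc |g x - g (a j)| ≤ Lip * |x - a j| := hLip x (a j)
                _ ≤ Lip * T := by
                    apply mul_le_mul_of_nonneg_left _ hLip0
                    rw [abs_le]
                    constructor
                    · have := hx.1; linarith
                    · have := hx.2; rw [haj] at this; linarith
            calc |f x| * |g x - g (a j)| ≤ |f x| * (Lip * T) :=
                  mul_le_mul_of_nonneg_left h1 (abs_nonneg _)
              _ = Lip * T * |f x| := by ring
      _ = Lip * T * ∫ x in a j..a (j+1), |f x| := by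
          rw [intervalIntegral.integral_const_mul]
  calc |∫ x in (0:ℝ)..((n:ℝ)*T), f x * g x|
      = |∑ j ∈ Finset.range n, ∫ x in a j..a (j+1), f x * g x| := by rw [hsum1]
    _ ≤ ∑ j ∈ Finset.range n, |∫ x in a j..a (j+1), f x * g x| :=
        Finset.abs_sum_le_sum_abs _ _
    _ ≤ ∑ j ∈ Finset.range n, Lip * T * ∫ x in a j..a (j+1), |f x| :=
        Finset.sum_le_sum (fun j _ => key j)
    _ = Lip * T * ∑ j ∈ Finset.range n, ∫ x in a j..a (j+1), |f x| := by
        rw [Finset.mul_sum]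
    _ = Lip * T * ∫ x in (0:ℝ)..((n:ℝ)*T), |f x| := by rw [hsum2]

lemma perVar_add {u v : ℝ → ℝ} {L : ℝ} (hu : Continuous u) (hv : Continuous v) :
    perVar L (fun x => u x + v x) = perVar L u + perVar L v
      + 2 * ((1/L) * ∫ x in (0:ℝ)..L,
          (u x - (1/L) * ∫ y in (0:ℝ)..L, u y) * (v x - (1/L) * ∫ y in (0:ℝ)..L, v y)) := by
  unfold perVar
  rw [intervalIntegral.integral_add (hu.intervalIntegrable _ _) (hv.intervalIntegrable _ _)]
  set mu := (1/L) * ∫ y in (0:ℝ)..L, u y with hmu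
  set mv := (1/L) * ∫ y in (0:ℝ)..L, v y with hmv
  have e : ∀ x ∈ Set.uIcc (0:ℝ) L,
      (u x + v x - 1/L * ((∫ y in (0:ℝ)..L, u y) + ∫ y in (0:ℝ)..L, v y)) ^ 2
        = (u x - mu)^2 + ((v x - mv)^2 + 2*((u x - mu)*(v x - mv))) := by
    intro x _
    rw [hmu, hmv]; ring
  rw [intervalIntegral.integral_congr e]
  have i1 : IntervalIntegrable (fun x => (u x - mu)^2) volume 0 L := by
    apply Continuous.intervalIntegrable; continuity
  have i2 : IntervalIntegrable (fun x => (v x - mv)^2) volume 0 L := by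
    apply Continuous.intervalIntegrable; continuity
  have i3 : IntervalIntegrable (fun x => 2*((u x - mu)*(v x - mv))) volume 0 L := by
    apply Continuous.intervalIntegrable; continuity
  rw [intervalIntegral.integral_add i1 (i2.add i3), intervalIntegral.integral_add i2 i3,
    intervalIntegral.integral_const_mul]
  ring

set_option maxHeartbeats 2000000 in
/-- Theorem 2 of the paper: multi-scale variance bounds -/
theorem multiscale_variance (h_n : ℕ → ℝ → ℝ) (γ : ℕ → ℝ) (r : ℕ → ℕ) (R : ℕ → ℝ)
    (γmin γmax ρmin K₁ : ℝ)
    (hC1 : ∀ n, ContDiff ℝ 1 (h_n n)) (hper : ∀ n, Function.Periodic (h_n n) 1)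
    (hvar : ∀ n, perVar 1 (h_n n) = 1) (hK₁ : ∀ n x, |deriv (h_n n) x| ≤ K₁)
    (hγ0 : γ 0 = 1) (hγpos : ∀ n, 0 < γ n) (hγmin : 1 < γmin)
    (hratio : ∀ n, γmin ≤ γ (n + 1) / γ n ∧ γ (n + 1) / γ n ≤ γmax)
    (hr0 : r 0 = 1) (hρ : 2 ≤ ρmin) (hrk : ∀ k, 1 ≤ k → ρmin ≤ (r k : ℝ))
    (hR : ∀ n, R n = ∏ k ∈ Finset.range (n + 1), (r k : ℝ))
    (hε : 4 * K₁ * (ρmin * (γmin - 1))⁻¹ < 1) :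
    ∀ p, (1 - 4 * K₁ * (ρmin * (γmin - 1))⁻¹) * ∑ k ∈ Finset.range (p + 1), γ k ^ 2
          ≤ perVar (R p) (fun x => ∑ n ∈ Finset.range (p + 1), γ n * h_n n (x / R n)) ∧
        perVar (R p) (fun x => ∑ n ∈ Finset.range (p + 1), γ n * h_n n (x / R n))
          ≤ (1 + 4 * K₁ * (ρmin * (γmin - 1))⁻¹) * ∑ k ∈ Finset.range (p + 1), γ k ^ 2 := by
  have hK0 : 0 ≤ K₁ := le_trans (abs_nonneg _) (hK₁ 0 0)
  have hg1 : (0:ℝ) < γmin - 1 := by linarith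
  have hρ0 : (0:ℝ) < ρmin := by linarith
  set ε := 4 * K₁ * (ρmin * (γmin - 1))⁻¹ with hεdef
  have hε0 : 0 ≤ ε := by positivity
  have hr1 : ∀ k, (1:ℝ) ≤ (r k : ℝ) := by
    intro k
    match k with
    | 0 => simp [hr0]
    | (k+1) =>
      have := hrk (k+1) (by omega)
      linarith
  have hRpos : ∀ n, 0 < R n := by
    intro n; rw [hR n]; apply Finset.prod_pos; intro i _; linarith [hr1 i]
  have hRsucc : ∀ n, R (n+1) = R n * r (n+1) := by
    intro n; rw [hR (n+1), hR n, Finset.prod_range_succ]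
  have hγstep : ∀ n, γmin * γ n ≤ γ (n+1) := by
    intro n
    have h := (hratio n).1
    rw [le_div_iff₀ (hγpos n)] at h
    linarith
  have hg2 : (0:ℝ) < γmin^2 - 1 := by nlinarith
  have Sb : ∀ p, (∑ k ∈ Finset.range (p+1), γ k ^ 2) * (γmin^2 - 1) ≤ γ (p+1)^2 := by
    intro p
    induction p with
    | zero =>
      rw [Finset.sum_range_one, hγ0]
      have h1 := hγstep 0
      rw [hγ0, mul_one] at h1
      nlinarith
    | succ p ih =>
      rw [Finset.sum_range_succ]
      have h1 := hγstep (p+1)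
      have h2 := hγpos (p+1)
      have h3 := hγpos (p+2)
      nlinarith [ih, sq_nonneg (γ (p+1)), mul_self_le_mul_self (by positivity : (0:ℝ) ≤ γmin * γ (p+1)) h1]
  have hLiph : ∀ m a b, |h_n m a - h_n m b| ≤ K₁ * |a - b| := by
    intro m a b
    have h := Convex.norm_image_sub_le_of_norm_deriv_le (f := h_n m) (s := Set.univ)
      (fun x _ => ((hC1 m).differentiable one_ne_zero).differentiableAt)
      (fun x _ => by rw [Real.norm_eq_abs]; exact hK₁ m x)
      convex_univ (Set.mem_univ b) (Set.mem_univ a)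
    simpa [Real.norm_eq_abs] using h
  intro p
  induction p with
  | zero =>
    have hR0 : R 0 = 1 := by rw [hR 0]; simp [hr0]
    have hfun : (fun x => ∑ n ∈ Finset.range (0+1), γ n * h_n n (x / R n)) = h_n 0 := by
      funext x
      rw [Finset.sum_range_one, hγ0, hR0]
      simp
    rw [hR0, hfun, hvar 0, Finset.sum_range_one, hγ0]
    constructor <;> nlinarith
  | succ p ih =>
    set T := R p with hTdef
    set u : ℝ → ℝ := fun x => ∑ n ∈ Finset.range (p+1), γ n * h_n n (x / R n) with hudef
    set v : ℝ → ℝ := fun x => γ (p+1) * h_n (p+1) (x / R (p+1)) with hvdef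
    obtain ⟨ihl, ihr⟩ := ih
    have hTpos : 0 < T := hRpos p
    have hLpos : 0 < R (p+1) := hRpos (p+1)
    have hrq0 : r (p+1) ≠ 0 := by
      have h := hr1 (p+1)
      by_contra hc
      rw [hc] at h
      norm_num at h
    have hrqρ : ρmin ≤ (r (p+1) : ℝ) := hrk (p+1) (by omega)
    have hrqpos : (0:ℝ) < (r (p+1) : ℝ) := by
      have := hr1 (p+1); linarith
    have hLeq : R (p+1) = ((r (p+1) : ℕ) : ℝ) * T := by rw [hRsucc p]; ring
    have hfun : (fun x => ∑ n ∈ Finset.range (p+1+1), γ n * h_n n (x / R n))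
        = fun x => u x + v x := by
      funext x
      rw [Finset.sum_range_succ]
    have hu : Continuous u := by
      apply continuous_finset_sum
      intro n _
      exact continuous_const.mul ((hC1 n).continuous.comp (continuous_id.div_const (R n)))
    have hv : Continuous v :=
      continuous_const.mul ((hC1 (p+1)).continuous.comp (continuous_id.div_const _))
    -- periodicity of u with period T = R p
    have huper : Function.Periodic u T := by
      intro x
      apply Finset.sum_congr rfl
      intro n hn
      have hn' : n + 1 ≤ p + 1 := by
        have := Finset.mem_range.mp hn; omega
      set N : ℕ := ∏ k ∈ Finset.Ico (n+1) (p+1), r k with hN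
      have hTN : T = R n * N := by
        rw [hTdef, hR p, hR n,
          ← Finset.prod_range_mul_prod_Ico (fun k => ((r k : ℕ) : ℝ)) hn']
        congr 1
        rw [hN]
        push_cast
        rfl
      have hRn0 : R n ≠ 0 := (hRpos n).ne'
      have harg : (x + T) / R n = x / R n + N := by
        rw [hTN]; field_simp
      rw [harg]
      congr 1
      simpa using (hper n).nat_mul N (x / R n)
    -- mean and variance of u over the long period
    have hmeaneq : (1/(R (p+1))) * ∫ x in (0:ℝ)..(R (p+1)), u x
        = (1/T) * ∫ x in (0:ℝ)..T, u x := by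
      rw [hLeq]
      exact mean_nat_mul hTpos.ne' hu huper hrq0
    have hVL : perVar (R (p+1)) u = perVar T u := by
      rw [hLeq]
      exact perVar_nat_mul hTpos.ne' hu huper hrq0
    -- variance of v
    have hVv : perVar (R (p+1)) v = γ (p+1)^2 := by
      have h1 : perVar (R (p+1)) v = perVar 1 (fun y => γ (p+1) * h_n (p+1) y) :=
        perVar_comp_div (g := fun y => γ (p+1) * h_n (p+1) y) hLpos
      rw [h1, perVar_const_mul, hvar]
      ring
    -- cross term setup
    set mT := (1/T) * ∫ y in (0:ℝ)..T, u y with hmT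
    set mv := (1/(R (p+1))) * ∫ y in (0:ℝ)..(R (p+1)), v y with hmvdef
    have hfzc : Continuous (fun x => u x - mT) := hu.sub continuous_const
    have hfzper : Function.Periodic (fun x => u x - mT) T := fun x => by simp [huper x]
    have hfzzero : ∫ x in (0:ℝ)..T, (u x - mT) = 0 := by
      rw [intervalIntegral.integral_sub (hu.intervalIntegrable _ _) intervalIntegrable_const,
        intervalIntegral.integral_const, hmT]
      have hT0 : T ≠ 0 := hTpos.ne'
      simp only [smul_eq_mul, sub_zero]
      field_simp
      ring
    have hgzc : Continuous (fun x => v x - mv) := hv.sub continuous_const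
    have hLipv : ∀ x y : ℝ, |(v x - mv) - (v y - mv)|
        ≤ (γ (p+1) * K₁ / R (p+1)) * |x - y| := by
      intro x y
      have h1 : (v x - mv) - (v y - mv)
          = γ (p+1) * (h_n (p+1) (x / R (p+1)) - h_n (p+1) (y / R (p+1))) := by
        rw [hvdef]; ring
      rw [h1, abs_mul, abs_of_pos (hγpos (p+1))]
      have h2 := hLiph (p+1) (x / R (p+1)) (y / R (p+1))
      have h3 : |x / R (p+1) - y / R (p+1)| = |x - y| / R (p+1) := by
        rw [div_sub_div_same, abs_div, abs_of_pos hLpos]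
      calc γ (p+1) * |h_n (p+1) (x / R (p+1)) - h_n (p+1) (y / R (p+1))|
          ≤ γ (p+1) * (K₁ * |x / R (p+1) - y / R (p+1)|) :=
            mul_le_mul_of_nonneg_left h2 (hγpos (p+1)).le
        _ = γ (p+1) * K₁ / R (p+1) * |x - y| := by
            rw [h3]; field_simp
    have hcross : |∫ x in (0:ℝ)..(R (p+1)), (u x - mT) * (v x - mv)|
        ≤ (γ (p+1) * K₁ / R (p+1)) * T * ∫ x in (0:ℝ)..(R (p+1)), |u x - mT| := by
      have h := mix (T := T) (Lip := γ (p+1) * K₁ / R (p+1)) hTpos hfzc hfzper hfzzero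
        hgzc (div_nonneg (mul_nonneg (hγpos (p+1)).le hK0) hLpos.le) hLipv (r (p+1))
      rwa [← hLeq] at h
    -- abbreviations
    set I : ℝ := ∫ x in (0:ℝ)..(R (p+1)), |u x - mT| with hI
    set C : ℝ := (1/(R (p+1))) * ∫ x in (0:ℝ)..(R (p+1)), (u x - mT) * (v x - mv) with hC
    have hI0 : 0 ≤ I := by
      rw [hI]
      apply intervalIntegral.integral_nonneg hLpos.le
      intro x _
      exact abs_nonneg _
    -- Cauchy-Schwarz: mean of |u - mT| squared ≤ variance
    have hVexpr : perVar (R (p+1)) u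
        = (1/(R (p+1))) * ∫ x in (0:ℝ)..(R (p+1)), (u x - mT)^2 := by
      unfold perVar
      rw [hmeaneq]
    have hcs := cauchy_mean_abs (L := R (p+1)) hLpos.le hfzc
    have hMsq : ((1/(R (p+1))) * I)^2 ≤ perVar T u := by
      rw [← hVL, hVexpr]
      have e : ((1/(R (p+1))) * I)^2 = (1/(R (p+1)))^2 * I^2 := by ring
      rw [e]
      calc (1/(R (p+1)))^2 * I^2
          ≤ (1/(R (p+1)))^2 * (R (p+1) * ∫ x in (0:ℝ)..(R (p+1)), (u x - mT)^2) := by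
            apply mul_le_mul_of_nonneg_left _ (by positivity)
            exact hcs
        _ = (1/(R (p+1))) * ∫ x in (0:ℝ)..(R (p+1)), (u x - mT)^2 := by
            have := hLpos.ne'
            field_simp
    -- numeric bounds
    have hS0 : 0 ≤ ∑ k ∈ Finset.range (p+1), γ k ^ 2 :=
      Finset.sum_nonneg fun k _ => sq_nonneg _
    have hVub : perVar T u ≤ 2 * γ (p+1)^2 / (γmin^2 - 1) := by
      have h1 : perVar T u ≤ 2 * ∑ k ∈ Finset.range (p+1), γ k ^ 2 := by
        have h1a : ε * ∑ k ∈ Finset.range (p+1), γ k ^ 2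
            ≤ 1 * ∑ k ∈ Finset.range (p+1), γ k ^ 2 :=
          mul_le_mul_of_nonneg_right hε.le hS0
        linarith
      have h2 := Sb p
      rw [le_div_iff₀ hg2]
      have h1b := mul_le_mul_of_nonneg_right h1 hg2.le
      linarith
    have hMle : (1/(R (p+1))) * I ≤ 2 * γ (p+1) / (γmin - 1) := by
      have hB0 : (0:ℝ) ≤ 2 * γ (p+1) / (γmin - 1) :=
        div_nonneg (by linarith [hγpos (p+1)]) hg1.le
      have hM0 : (0:ℝ) ≤ (1/(R (p+1))) * I :=
        mul_nonneg (one_div_nonneg.mpr hLpos.le) hI0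
      have e1 : 2 * γ (p+1)^2 / (γmin^2 - 1) ≤ (2 * γ (p+1) / (γmin - 1))^2 := by
        rw [div_pow, div_le_div_iff₀ hg2 (by positivity)]
        nlinarith [mul_nonneg (sq_nonneg (γ (p+1)))
          (mul_nonneg hg1.le (by linarith : (0:ℝ) ≤ γmin + 3))]
      calc (1/(R (p+1))) * I = Real.sqrt (((1/(R (p+1))) * I)^2) := (Real.sqrt_sq hM0).symm
        _ ≤ Real.sqrt ((2 * γ (p+1) / (γmin - 1))^2) :=
            Real.sqrt_le_sqrt (le_trans hMsq (le_trans hVub e1))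
        _ = 2 * γ (p+1) / (γmin - 1) := Real.sqrt_sq hB0
    have hCabs : |C| ≤ γ (p+1) * K₁ * ((1/(R (p+1))) * I) / (r (p+1)) := by
      rw [hC, abs_mul, abs_of_pos (one_div_pos.mpr hLpos)]
      calc (1/(R (p+1))) * |∫ x in (0:ℝ)..(R (p+1)), (u x - mT) * (v x - mv)|
          ≤ (1/(R (p+1))) * ((γ (p+1) * K₁ / R (p+1)) * T * I) := by
            apply mul_le_mul_of_nonneg_left _ (one_div_nonneg.mpr hLpos.le)
            rw [hI]
            exact hcross
        _ = γ (p+1) * K₁ * ((1/(R (p+1))) * I) / (r (p+1)) := by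
            rw [hLeq]
            have h1 : ((r (p+1) : ℕ) : ℝ) ≠ 0 := hrqpos.ne'
            have h2 : T ≠ 0 := hTpos.ne'
            field_simp
    have hcross2 : 2 * |C| ≤ ε * γ (p+1)^2 := by
      have h3 : γ (p+1) * K₁ * ((1/(R (p+1))) * I) / (r (p+1))
          ≤ γ (p+1) * K₁ * (2 * γ (p+1) / (γmin - 1)) / ρmin := by
        apply div_le_div₀
          (mul_nonneg (mul_nonneg (hγpos (p+1)).le hK0)
            (div_nonneg (by linarith [hγpos (p+1)]) hg1.le)) _ hρ0 hrqρ
        exact mul_le_mul_of_nonneg_left hMle (mul_nonneg (hγpos (p+1)).le hK0)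
      have h4 : 2 * (γ (p+1) * K₁ * (2 * γ (p+1) / (γmin - 1)) / ρmin) = ε * γ (p+1)^2 := by
        rw [hεdef]
        field_simp
        ring
      calc 2 * |C| ≤ 2 * (γ (p+1) * K₁ * ((1/(R (p+1))) * I) / (r (p+1))) := by linarith
        _ ≤ 2 * (γ (p+1) * K₁ * (2 * γ (p+1) / (γmin - 1)) / ρmin) := by linarith
        _ = ε * γ (p+1)^2 := h4
    -- assemble
    have hexp := perVar_add (L := R (p+1)) hu hv
    have main : perVar (R (p+1)) (fun x => u x + v x)
        = perVar T u + γ (p+1)^2 + 2 * C := by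
      rw [hexp, hVL, hVv, hmeaneq, ← hmvdef, hC]
    rw [hfun, main, Finset.sum_range_succ]
    have hClb : -(ε * γ (p+1)^2) ≤ 2 * C := by
      have := neg_abs_le C
      linarith [hcross2]
    have hCub : 2 * C ≤ ε * γ (p+1)^2 := by
      have := le_abs_self C
      linarith [hcross2]
    constructor
    · linarith [ihl, hClb]
    · linarith [ihr, hCub]
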